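/- Assume d^* < ∞ and that there is a constant C₂ > 0 with d_j^− = d_{k_{j−1}+1} + ⋯ + d_{k_j} ≤ C₂ · min{d_{k_{j−1}+1}, d_{k_j}} for all j. Then the form t_{X,β} is lower semibounded (i.e., there exists C ≥ 0 with t_{X,β}[f] ≥ −C ∫₀^∞|f|² dx for all f in its domain) if and only if there exists a constant C' ≥ 0 such that 1/|β_{k_j}| ≤ C' · min{d_j^−, d_{j+1}^−} for all j. -/

import Mathlib

open MeasureTheory Set Filter

noncomputable section

/-- A function that is *piecewise `H¹`* with respect to the partition points
`x 0 < x 1 < x 2 < ⋯` of `[0,∞)`: on each interval `Δ_{k+1} = [x k, x (k+1)]` it is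
absolutely continuous with derivative `f' ∈ L²`, encoded via the fundamental
theorem of calculus; `fr k = f(x k +)` and `fl (k+1) = f(x (k+1) −)` are the
one-sided limits at the nodes. -/
structure PW1 (x : ℕ → ℝ) where
  f : ℝ → ℝ
  f' : ℝ → ℝ
  fr : ℕ → ℝ
  fl : ℕ → ℝ
  int_d : ∀ k, IntegrableOn f' (Icc (x k) (x (k + 1))) volume
  sq_d : ∀ k, IntegrableOn (fun t => f' t ^ 2) (Icc (x k) (x (k + 1))) volume
  ftc : ∀ k, ∀ t ∈ Ioo (x k) (x (k + 1)), f t = fr k + ∫ s in Ioc (x k) t, f' s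
  fl_eq : ∀ k, fl (k + 1) = fr k + ∫ s in Ioc (x k) (x (k + 1)), f' s

/-- The jump `f(x_{k+1}+) − f(x_{k+1}−)` of a piecewise `H¹` function at the
interior node `x (k+1)` (the paper's node `x_{k+1}`). -/
def PW1.jump {x : ℕ → ℝ} (F : PW1 x) (k : ℕ) : ℝ := F.fr (k + 1) - F.fl (k + 1)

/-- Membership in the domain of the form `t_{X,β,q}`: `f ∈ L²(0,∞)`,
`∫₀^∞ |f'|² < ∞`, `∫₀^∞ |q| |f|² < ∞` and `Σ_k |f(x_k+) − f(x_k−)|²/|β_k| < ∞`. -/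
def MemDom (x : ℕ → ℝ) (q : ℝ → ℝ) (β : ℕ → ℝ) (F : PW1 x) : Prop :=
  IntegrableOn (fun t => F.f t ^ 2) (Ioi 0) volume ∧
  IntegrableOn (fun t => F.f' t ^ 2) (Ioi 0) volume ∧
  IntegrableOn (fun t => |q t| * F.f t ^ 2) (Ioi 0) volume ∧
  Summable (fun k => F.jump k ^ 2 / |β (k + 1)|)

/-- The value of the quadratic form
`t_{X,β,q}[f] = ∫₀^∞ (|f'|² + q |f|²) dx + Σ_k |f(x_k+) − f(x_k−)|²/β_k`. -/
def formVal (x : ℕ → ℝ) (q : ℝ → ℝ) (β : ℕ → ℝ) (F : PW1 x) : ℝ :=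
  (∫ t in Ioi (0 : ℝ), (F.f' t ^ 2 + q t * F.f t ^ 2)) +
    ∑' k, F.jump k ^ 2 / β (k + 1)


/-- `dminus x κ j` is the paper's `d_{j+1}^- = x_{k_{j+1}} − x_{k_j}` (with `k_0 = 0`),
the distance between the consecutive nodes `x_{k_j}` supporting negative
intensities; `κ j` is the paper's index `k_{j+1}`. -/
def dminus (x : ℕ → ℝ) (κ : ℕ → ℕ) : ℕ → ℝ
  | 0 => x (κ 0) - x 0
  | j + 1 => x (κ (j + 1)) - x (κ j)

/-- `kprev κ j` is the paper's `k_j` when `κ j` is the paper's `k_{j+1}`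
(so `kprev κ 0 = k_0 = 0`). -/
def kprev (κ : ℕ → ℕ) : ℕ → ℕ
  | 0 => 0
  | j + 1 => κ j

/-- Cauchy-Schwarz for set integrals on ℝ. -/
lemma cs_aux {s : Set ℝ} (hs : MeasurableSet s) (hμ : volume s ≠ ⊤) {h : ℝ → ℝ}
    (hint : IntegrableOn h s volume) (hsq : IntegrableOn (fun t => h t ^ 2) s volume) :
    (∫ t in s, |h t|) ^ 2 ≤ (volume s).toReal * ∫ t in s, h t ^ 2 := by
  set m := (volume s).toReal with hm
  set I := ∫ t in s, |h t| with hI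
  have habs : IntegrableOn (fun t => |h t|) s volume := hint.abs
  rcases eq_or_ne (volume s) 0 with h0 | h0
  · have hI0 : I = 0 := by
      rw [hI, Measure.restrict_eq_zero.2 h0, integral_zero_measure]
    have hm0 : m = 0 := by rw [hm, h0]; simp
    rw [hI0, hm0]
    simp
  · have hm0 : 0 < m := ENNReal.toReal_pos h0 hμ
    have key : 0 ≤ ∫ t in s, (m * |h t| - I) ^ 2 :=
      setIntegral_nonneg hs fun t _ => sq_nonneg _
    have expand : ∀ t : ℝ, (m * |h t| - I) ^ 2
        = m ^ 2 * h t ^ 2 - (2 * m * I) * |h t| + I ^ 2 := by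
      intro t
      have : |h t| ^ 2 = h t ^ 2 := sq_abs _
      nlinarith [this]
    have hint1 : IntegrableOn (fun t => m ^ 2 * h t ^ 2 - (2 * m * I) * |h t|) s volume :=
      (hsq.const_mul _).sub (habs.const_mul _)
    have hint2 : IntegrableOn (fun _ : ℝ => I ^ 2) s volume :=
      integrableOn_const hμ
    have calc1 : ∫ t in s, (m * |h t| - I) ^ 2
        = m ^ 2 * (∫ t in s, h t ^ 2) - (2 * m * I) * I + I ^ 2 * m := by
      calc ∫ t in s, (m * |h t| - I) ^ 2
          = ∫ t in s, (m ^ 2 * h t ^ 2 - (2 * m * I) * |h t| + I ^ 2) := by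
            exact integral_congr_ae (Filter.Eventually.of_forall fun t => expand t)
        _ = (∫ t in s, (m ^ 2 * h t ^ 2 - (2 * m * I) * |h t|)) + ∫ t in s, (I ^ 2 : ℝ) :=
            integral_add hint1 hint2
        _ = m ^ 2 * (∫ t in s, h t ^ 2) - (2 * m * I) * I + I ^ 2 * m := by
            rw [integral_sub (hsq.const_mul _) (habs.const_mul _),
              integral_const_mul, integral_const_mul, setIntegral_const, measureReal_def]
            rw [smul_eq_mul, ← hI, ← hm]
            ring
    rw [calc1] at key
    nlinarith [key, hm0]

lemma Ioc_sub_Ioi {x : ℕ → ℝ} (hx0 : x 0 = 0) (hmono : StrictMono x) (k : ℕ) :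
    Ioc (x k) (x (k + 1)) ⊆ Ioi (0 : ℝ) := by
  intro t ht
  have h0 : (0 : ℝ) ≤ x k := hx0 ▸ hmono.monotone (Nat.zero_le k)
  exact lt_of_le_of_lt h0 ht.1

lemma Ioc_disj {x : ℕ → ℝ} (hmono : StrictMono x) {i j : ℕ} (hij : i ≠ j) :
    Disjoint (Ioc (x i) (x (i + 1))) (Ioc (x j) (x (j + 1))) := by
  rw [Set.Ioc_disjoint_Ioc]
  rcases Nat.lt_or_ge i j with h | h
  · have : x (i + 1) ≤ x j := hmono.monotone h
    calc min (x (i + 1)) (x (j + 1)) ≤ x (i + 1) := min_le_left _ _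
      _ ≤ x j := this
      _ ≤ max (x i) (x j) := le_max_right _ _
  · have hji : j < i := lt_of_le_of_ne h (Ne.symm hij)
    have : x (j + 1) ≤ x i := hmono.monotone hji
    calc min (x (i + 1)) (x (j + 1)) ≤ x (j + 1) := min_le_right _ _
      _ ≤ x i := this
      _ ≤ max (x i) (x j) := le_max_left _ _

/-- Finite sums of integrals of a nonnegative function over the disjoint intervals
`Ioc (x k) (x (k+1))` are bounded by the integral over `Ioi 0`. -/
lemma sum_intervals_le {x : ℕ → ℝ} (hx0 : x 0 = 0) (hmono : StrictMono x)
    {g : ℝ → ℝ} (hg : ∀ t, 0 ≤ g t) (hint : IntegrableOn g (Ioi 0) volume)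
    (S : Finset ℕ) :
    ∑ k ∈ S, ∫ t in Ioc (x k) (x (k + 1)), g t ≤ ∫ t in Ioi (0 : ℝ), g t := by
  have hintk : ∀ k ∈ S, IntegrableOn g (Ioc (x k) (x (k + 1))) volume :=
    fun k _ => hint.mono_set (Ioc_sub_Ioi hx0 hmono k)
  rw [← integral_biUnion_finset S (fun k _ => measurableSet_Ioc)
      (fun i _ j _ hij => Ioc_disj hmono hij) hintk]
  apply setIntegral_mono_set hint
  · exact Filter.Eventually.of_forall fun t => hg t
  · apply HasSubset.Subset.eventuallyLE
    exact Set.iUnion₂_subset fun k _ => Ioc_sub_Ioi hx0 hmono k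

/-- Left-endpoint trace bound. -/
lemma trace_left {x : ℕ → ℝ} (hmono : StrictMono x) (F : PW1 x) (k : ℕ)
    (hf2 : IntegrableOn (fun t => F.f t ^ 2) (Ioc (x k) (x (k + 1))) volume)
    {δ : ℝ} (hδ : 0 < δ) (hδd : δ ≤ x (k + 1) - x k) :
    F.fl (k + 1) ^ 2 ≤ (2 / δ) * (∫ t in Ioc (x k) (x (k + 1)), F.f t ^ 2)
      + 2 * δ * (∫ t in Ioc (x k) (x (k + 1)), F.f' t ^ 2) := by
  set a := x k with ha
  set b := x (k + 1) with hb
  have hab : a < b := hmono (Nat.lt_succ_self k)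
  set P := ∫ t in Ioc a b, F.f t ^ 2 with hP
  set E := ∫ t in Ioc a b, F.f' t ^ 2 with hE
  have hE0 : 0 ≤ E := setIntegral_nonneg measurableSet_Ioc fun t _ => sq_nonneg _
  have hint' : IntegrableOn F.f' (Ioc a b) volume := (F.int_d k).mono_set Ioc_subset_Icc_self
  have hsq' : IntegrableOn (fun t => F.f' t ^ 2) (Ioc a b) volume :=
    (F.sq_d k).mono_set Ioc_subset_Icc_self
  set W := Ioo (b - δ) b with hW
  have hWsub : W ⊆ Ioo a b := by
    intro t ht
    exact ⟨lt_of_le_of_lt (by linarith) ht.1, ht.2⟩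
  have hpt : ∀ t ∈ W, F.fl (k + 1) ^ 2 ≤ 2 * F.f t ^ 2 + 2 * (δ * E) := by
    intro t ht
    have htab : t ∈ Ioo a b := hWsub ht
    have h1 : F.f t = F.fr k + ∫ s in Ioc a t, F.f' s := F.ftc k t htab
    have h2 : F.fl (k + 1) = F.fr k + ∫ s in Ioc a b, F.f' s := F.fl_eq k
    have hsplit : ∫ s in Ioc a b, F.f' s
        = (∫ s in Ioc a t, F.f' s) + ∫ s in Ioc t b, F.f' s := by
      rw [← setIntegral_union (Set.Ioc_disjoint_Ioc.2 (by
            simp [le_max_iff, min_le_iff]))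
          measurableSet_Ioc
          (hint'.mono_set (Ioc_subset_Ioc le_rfl htab.2.le))
          (hint'.mono_set (Ioc_subset_Ioc htab.1.le le_rfl)),
        Set.Ioc_union_Ioc_eq_Ioc htab.1.le htab.2.le]
    set J := ∫ s in Ioc t b, F.f' s with hJ
    have hflJ : F.fl (k + 1) = F.f t + J := by rw [h2, hsplit, h1]; ring
    have hJsq : J ^ 2 ≤ δ * E := by
      have hJabs : |J| ≤ ∫ s in Ioc t b, |F.f' s| := by
        simpa [Real.norm_eq_abs] using
          norm_integral_le_integral_norm (μ := volume.restrict (Ioc t b)) F.f'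
      have hcs : (∫ s in Ioc t b, |F.f' s|) ^ 2
          ≤ (volume (Ioc t b)).toReal * ∫ s in Ioc t b, F.f' s ^ 2 :=
        cs_aux measurableSet_Ioc (by rw [Real.volume_Ioc]; exact ENNReal.ofReal_ne_top)
          (hint'.mono_set (Ioc_subset_Ioc htab.1.le le_rfl))
          (hsq'.mono_set (Ioc_subset_Ioc htab.1.le le_rfl))
      have hvol : (volume (Ioc t b)).toReal = b - t := by
        rw [Real.volume_Ioc, ENNReal.toReal_ofReal (by linarith [htab.2])]
      have hItail : ∫ s in Ioc t b, F.f' s ^ 2 ≤ E := by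
        apply setIntegral_mono_set hsq'
        · exact Filter.Eventually.of_forall fun s => sq_nonneg _
        · exact HasSubset.Subset.eventuallyLE (Ioc_subset_Ioc htab.1.le le_rfl)
      have hbt : b - t ≤ δ := by simp only [hW, mem_Ioo] at ht; linarith [ht.1]
      have hItail0 : 0 ≤ ∫ s in Ioc t b, F.f' s ^ 2 :=
        setIntegral_nonneg measurableSet_Ioc fun s _ => sq_nonneg _
      calc J ^ 2 = |J| ^ 2 := (sq_abs _).symm
        _ ≤ (∫ s in Ioc t b, |F.f' s|) ^ 2 := by
            apply pow_le_pow_left₀ (abs_nonneg _) hJabs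
        _ ≤ (b - t) * ∫ s in Ioc t b, F.f' s ^ 2 := by rw [← hvol]; exact hcs
        _ ≤ δ * E := mul_le_mul hbt hItail hItail0 hδ.le
    have hsq2 : F.fl (k + 1) ^ 2 = (F.f t + J) ^ 2 := by rw [hflJ]
    rw [hsq2]
    nlinarith [sq_nonneg (F.f t - J), hJsq]
  have hWmeas : MeasurableSet W := measurableSet_Ioo
  have hvolW : (volume W).toReal = δ := by
    rw [hW, Real.volume_Ioo, ENNReal.toReal_ofReal (by linarith)]
    ring_nf
  have hf2W : IntegrableOn (fun t => F.f t ^ 2) W volume :=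
    hf2.mono_set (hWsub.trans Ioo_subset_Ioc_self)
  have hlhs : IntegrableOn (fun _ : ℝ => F.fl (k + 1) ^ 2) W volume :=
    integrableOn_const (by rw [hW, Real.volume_Ioo]; exact ENNReal.ofReal_ne_top)
  have hrhs : IntegrableOn (fun t => 2 * F.f t ^ 2 + 2 * (δ * E)) W volume :=
    (hf2W.const_mul 2).add (integrableOn_const (by rw [hW, Real.volume_Ioo]; exact ENNReal.ofReal_ne_top))
  have hmono_int : ∫ t in W, F.fl (k + 1) ^ 2 ≤ ∫ t in W, (2 * F.f t ^ 2 + 2 * (δ * E)) :=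
    setIntegral_mono_on hlhs hrhs hWmeas hpt
  have hleft : ∫ t in W, F.fl (k + 1) ^ 2 = δ * F.fl (k + 1) ^ 2 := by
    rw [setIntegral_const, measureReal_def, hvolW, smul_eq_mul]
  have hright : ∫ t in W, (2 * F.f t ^ 2 + 2 * (δ * E))
      = 2 * (∫ t in W, F.f t ^ 2) + δ * (2 * (δ * E)) := by
    rw [integral_add (hf2W.const_mul 2) (integrableOn_const (by rw [hW, Real.volume_Ioo]; exact ENNReal.ofReal_ne_top)),
      integral_const_mul, setIntegral_const, measureReal_def, hvolW, smul_eq_mul]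
  have hPW : ∫ t in W, F.f t ^ 2 ≤ P := by
    apply setIntegral_mono_set hf2
    · exact Filter.Eventually.of_forall fun s => sq_nonneg _
    · exact HasSubset.Subset.eventuallyLE (hWsub.trans Ioo_subset_Ioc_self)
  have hkey : δ * F.fl (k + 1) ^ 2 ≤ 2 * P + 2 * δ ^ 2 * E := by
    rw [hleft] at hmono_int
    rw [hright] at hmono_int
    nlinarith [hmono_int]
  have h2P : F.fl (k + 1) ^ 2 - 2 * δ * E ≤ 2 * P / δ := by
    rw [le_div_iff₀ hδ]
    nlinarith [hkey]
  have : (2 / δ) * P = 2 * P / δ := by ring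
  linarith [h2P, this.ge, this.le]

/-- Right-endpoint trace bound. -/
lemma trace_right {x : ℕ → ℝ} (hmono : StrictMono x) (F : PW1 x) (k : ℕ)
    (hf2 : IntegrableOn (fun t => F.f t ^ 2) (Ioc (x k) (x (k + 1))) volume)
    {δ : ℝ} (hδ : 0 < δ) (hδd : δ ≤ x (k + 1) - x k) :
    F.fr k ^ 2 ≤ (2 / δ) * (∫ t in Ioc (x k) (x (k + 1)), F.f t ^ 2)
      + 2 * δ * (∫ t in Ioc (x k) (x (k + 1)), F.f' t ^ 2) := by
  set a := x k with ha
  set b := x (k + 1) with hb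
  have hab : a < b := hmono (Nat.lt_succ_self k)
  set P := ∫ t in Ioc a b, F.f t ^ 2 with hP
  set E := ∫ t in Ioc a b, F.f' t ^ 2 with hE
  have hE0 : 0 ≤ E := setIntegral_nonneg measurableSet_Ioc fun t _ => sq_nonneg _
  have hint' : IntegrableOn F.f' (Ioc a b) volume := (F.int_d k).mono_set Ioc_subset_Icc_self
  have hsq' : IntegrableOn (fun t => F.f' t ^ 2) (Ioc a b) volume :=
    (F.sq_d k).mono_set Ioc_subset_Icc_self
  set W := Ioo a (a + δ) with hW
  have hWsub : W ⊆ Ioo a b := by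
    intro t ht
    exact ⟨ht.1, lt_of_lt_of_le ht.2 (by linarith)⟩
  have hpt : ∀ t ∈ W, F.fr k ^ 2 ≤ 2 * F.f t ^ 2 + 2 * (δ * E) := by
    intro t ht
    have htab : t ∈ Ioo a b := hWsub ht
    have h1 : F.f t = F.fr k + ∫ s in Ioc a t, F.f' s := F.ftc k t htab
    set J := ∫ s in Ioc a t, F.f' s with hJ
    have hfrJ : F.fr k = F.f t - J := by rw [h1]; ring
    have hJsq : J ^ 2 ≤ δ * E := by
      have hJabs : |J| ≤ ∫ s in Ioc a t, |F.f' s| := by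
        simpa [Real.norm_eq_abs] using
          norm_integral_le_integral_norm (μ := volume.restrict (Ioc a t)) F.f'
      have hcs : (∫ s in Ioc a t, |F.f' s|) ^ 2
          ≤ (volume (Ioc a t)).toReal * ∫ s in Ioc a t, F.f' s ^ 2 :=
        cs_aux measurableSet_Ioc (by rw [Real.volume_Ioc]; exact ENNReal.ofReal_ne_top)
          (hint'.mono_set (Ioc_subset_Ioc le_rfl htab.2.le))
          (hsq'.mono_set (Ioc_subset_Ioc le_rfl htab.2.le))
      have hvol : (volume (Ioc a t)).toReal = t - a := by
        rw [Real.volume_Ioc, ENNReal.toReal_ofReal (by linarith [htab.1])]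
      have hItail : ∫ s in Ioc a t, F.f' s ^ 2 ≤ E := by
        apply setIntegral_mono_set hsq'
        · exact Filter.Eventually.of_forall fun s => sq_nonneg _
        · exact HasSubset.Subset.eventuallyLE (Ioc_subset_Ioc le_rfl htab.2.le)
      have hbt : t - a ≤ δ := by simp only [hW, mem_Ioo] at ht; linarith [ht.2]
      have hItail0 : 0 ≤ ∫ s in Ioc a t, F.f' s ^ 2 :=
        setIntegral_nonneg measurableSet_Ioc fun s _ => sq_nonneg _
      calc J ^ 2 = |J| ^ 2 := (sq_abs _).symm
        _ ≤ (∫ s in Ioc a t, |F.f' s|) ^ 2 := by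
            apply pow_le_pow_left₀ (abs_nonneg _) hJabs
        _ ≤ (t - a) * ∫ s in Ioc a t, F.f' s ^ 2 := by rw [← hvol]; exact hcs
        _ ≤ δ * E := mul_le_mul hbt hItail hItail0 hδ.le
    have hsq2 : F.fr k ^ 2 = (F.f t - J) ^ 2 := by rw [hfrJ]
    rw [hsq2]
    nlinarith [sq_nonneg (F.f t + J), hJsq]
  have hWmeas : MeasurableSet W := measurableSet_Ioo
  have hvolW : (volume W).toReal = δ := by
    rw [hW, Real.volume_Ioo, ENNReal.toReal_ofReal (by linarith)]
    ring_nf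
  have hf2W : IntegrableOn (fun t => F.f t ^ 2) W volume :=
    hf2.mono_set (hWsub.trans Ioo_subset_Ioc_self)
  have hlhs : IntegrableOn (fun _ : ℝ => F.fr k ^ 2) W volume :=
    integrableOn_const (by rw [hW, Real.volume_Ioo]; exact ENNReal.ofReal_ne_top)
  have hrhs : IntegrableOn (fun t => 2 * F.f t ^ 2 + 2 * (δ * E)) W volume :=
    (hf2W.const_mul 2).add (integrableOn_const (by rw [hW, Real.volume_Ioo]; exact ENNReal.ofReal_ne_top))
  have hmono_int : ∫ t in W, F.fr k ^ 2 ≤ ∫ t in W, (2 * F.f t ^ 2 + 2 * (δ * E)) :=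
    setIntegral_mono_on hlhs hrhs hWmeas hpt
  have hleft : ∫ t in W, F.fr k ^ 2 = δ * F.fr k ^ 2 := by
    rw [setIntegral_const, measureReal_def, hvolW, smul_eq_mul]
  have hright : ∫ t in W, (2 * F.f t ^ 2 + 2 * (δ * E))
      = 2 * (∫ t in W, F.f t ^ 2) + δ * (2 * (δ * E)) := by
    rw [integral_add (hf2W.const_mul 2) (integrableOn_const (by rw [hW, Real.volume_Ioo]; exact ENNReal.ofReal_ne_top)),
      integral_const_mul, setIntegral_const, measureReal_def, hvolW, smul_eq_mul]
  have hPW : ∫ t in W, F.f t ^ 2 ≤ P := by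
    apply setIntegral_mono_set hf2
    · exact Filter.Eventually.of_forall fun s => sq_nonneg _
    · exact HasSubset.Subset.eventuallyLE (hWsub.trans Ioo_subset_Ioc_self)
  have hkey : δ * F.fr k ^ 2 ≤ 2 * P + 2 * δ ^ 2 * E := by
    rw [hleft] at hmono_int
    rw [hright] at hmono_int
    nlinarith [hmono_int]
  have h2P : F.fr k ^ 2 - 2 * δ * E ≤ 2 * P / δ := by
    rw [le_div_iff₀ hδ]
    nlinarith [hkey]
  have : (2 / δ) * P = 2 * P / δ := by ring
  linarith [h2P, this.ge, this.le]

/-- Arithmetic helper combining the trace bound with the weight bound. -/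
lemma weighted_bound {v P E w c₁ d D η : ℝ} (hP : 0 ≤ P) (hE : 0 ≤ E)
    (hw0 : 0 ≤ w) (hw : w ≤ c₁ * d) (hc₁ : 0 ≤ c₁) (hd : 0 < d) (hdD : d ≤ D) (hη : 0 < η)
    (hA : v ≤ (2 / min d η) * P + 2 * min d η * E) :
    v * w ≤ (2 * c₁ * (1 + D / η)) * P + (2 * c₁ * D * η) * E := by
  set δ := min d η with hδdef
  have hδ0 : 0 < δ := lt_min hd hη
  have hD0 : 0 < D := lt_of_lt_of_le hd hdD
  have hratio : d / δ ≤ 1 + D / η := by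
    rcases le_total d η with h | h
    · rw [hδdef, min_eq_left h, div_self hd.ne']
      have : 0 ≤ D / η := le_of_lt (div_pos hD0 hη)
      linarith
    · rw [hδdef, min_eq_right h]
      have h1 : d / η ≤ D / η := by
        exact div_le_div_of_nonneg_right hdD hη.le
      linarith
  have hv0 : 0 ≤ v ∨ True := Or.inr trivial
  have hRHS0 : 0 ≤ (2 / δ) * P + 2 * δ * E := by positivity
  have h1 : v * w ≤ ((2 / δ) * P + 2 * δ * E) * (c₁ * d) := by
    rcases le_or_gt v 0 with hv | hv
    · have : v * w ≤ 0 := mul_nonpos_of_nonpos_of_nonneg hv hw0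
      have : (0:ℝ) ≤ ((2 / δ) * P + 2 * δ * E) * (c₁ * d) := by positivity
      linarith
    · exact mul_le_mul hA hw hw0 hRHS0
  have e1 : (2 / δ) * P * (c₁ * d) ≤ (2 * c₁ * (1 + D / η)) * P := by
    have heq : (2 / δ) * P * (c₁ * d) = (2 * c₁ * (d / δ)) * P := by ring
    rw [heq]
    apply mul_le_mul_of_nonneg_right _ hP
    have := mul_le_mul_of_nonneg_left hratio (by positivity : (0:ℝ) ≤ 2 * c₁)
    linarith
  have e2 : 2 * δ * E * (c₁ * d) ≤ (2 * c₁ * D * η) * E := by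
    have heq : 2 * δ * E * (c₁ * d) = (2 * c₁ * (d * δ)) * E := by ring
    rw [heq]
    apply mul_le_mul_of_nonneg_right _ hE
    have hdδ : d * δ ≤ D * η := mul_le_mul hdD (min_le_right d η) hδ0.le hD0.le
    nlinarith [hdδ, hc₁]
  nlinarith [h1, e1, e2]



/-- The indicator of the open interval `(x a, x b)` as a piecewise-`H¹` function. -/
noncomputable def indTest (x : ℕ → ℝ) (hmono : StrictMono x) (a b : ℕ) : PW1 x where
  f := Set.indicator (Ioo (x a) (x b)) (fun _ => 1)
  f' := fun _ => 0
  fr := fun k => if a ≤ k ∧ k < b then 1 else 0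
  fl := fun k => if a < k ∧ k ≤ b then 1 else 0
  int_d := fun k => integrableOn_zero
  sq_d := fun k => by
    simpa using (integrableOn_zero :
      IntegrableOn (fun _ : ℝ => (0:ℝ)) (Icc (x k) (x (k+1))) volume)
  ftc := by
    intro k t ht
    rw [integral_zero, add_zero]
    show Set.indicator (Ioo (x a) (x b)) (fun _ => (1:ℝ)) t = if a ≤ k ∧ k < b then 1 else 0
    by_cases hk : a ≤ k ∧ k < b
    · rw [if_pos hk, Set.indicator_of_mem]
      exact ⟨lt_of_le_of_lt (hmono.monotone hk.1) ht.1,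
        lt_of_lt_of_le ht.2 (hmono.monotone hk.2)⟩
    · rw [if_neg hk, Set.indicator_of_notMem]
      intro htmem
      rcases Nat.lt_or_ge k a with h | h
      · exact absurd (lt_of_lt_of_le ht.2 (hmono.monotone h)) (not_lt.2 htmem.1.le)
      · rcases Nat.lt_or_ge k b with h2 | h2
        · exact hk ⟨h, h2⟩
        · exact absurd (lt_of_le_of_lt (hmono.monotone h2) ht.1) (not_lt.2 htmem.2.le)
  fl_eq := by
    intro k
    rw [integral_zero, add_zero]
    exact if_congr (by omega) rfl rfl

lemma indTest_jump (x : ℕ → ℝ) (hmono : StrictMono x) {a b : ℕ} (hab : a < b) (k : ℕ) :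
    (indTest x hmono a b).jump k
      = if k + 1 = a then 1 else if k + 1 = b then -1 else (0:ℝ) := by
  show (if a ≤ k + 1 ∧ k + 1 < b then (1:ℝ) else 0)
      - (if a < k + 1 ∧ k + 1 ≤ b then (1:ℝ) else 0) = _
  split_ifs <;> first | omega | norm_num

lemma indTest_fsq (x : ℕ → ℝ) (hmono : StrictMono x) (a b : ℕ) :
    (fun t => (indTest x hmono a b).f t ^ 2)
      = Set.indicator (Ioo (x a) (x b)) (fun _ => (1:ℝ)) := by
  funext t
  show (Set.indicator (Ioo (x a) (x b)) (fun _ => (1:ℝ)) t) ^ 2 = _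
  by_cases h : t ∈ Ioo (x a) (x b)
  · rw [Set.indicator_of_mem h]; norm_num
  · rw [Set.indicator_of_notMem h]; norm_num

/-- Evaluation of the form on the indicator test function:
key step of the necessity direction. -/
lemma necessity_step {x : ℕ → ℝ} (hx0 : x 0 = 0) (hmono : StrictMono x)
    (β : ℕ → ℝ) {C : ℝ}
    (hC : ∀ F : PW1 x, MemDom x (fun _ => 0) β F →
        formVal x (fun _ => 0) β F ≥ -C * ∫ t in Ioi (0:ℝ), F.f t ^ 2)
    {a b : ℕ} (hab : a < b) :
    (if 1 ≤ a then 1 / β a else 0) + 1 / β b ≥ -C * (x b - x a) := by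
  set F := indTest x hmono a b with hF
  have hjump := indTest_jump x hmono hab
  have hfsq := indTest_fsq x hmono a b
  have hIoo_sub : Ioo (x a) (x b) ⊆ Ioi (0:ℝ) := by
    intro t ht
    have : (0:ℝ) ≤ x a := hx0 ▸ hmono.monotone (Nat.zero_le a)
    exact lt_of_le_of_lt this ht.1
  have hfin : volume (Ioo (x a) (x b)) < ⊤ := by
    rw [Real.volume_Ioo]; exact ENNReal.ofReal_lt_top
  have hint_ind : IntegrableOn (fun t => F.f t ^ 2) (Ioi 0) volume := by
    rw [hfsq]
    exact ((integrable_indicator_iff measurableSet_Ioo).2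
      (integrableOn_const hfin.ne)).integrableOn
  have hmem : MemDom x (fun _ => 0) β F := by
    refine ⟨hint_ind, ?_, ?_, ?_⟩
    · show IntegrableOn (fun t => (0:ℝ) ^ 2) (Ioi 0) volume
      simpa using (integrableOn_zero :
        IntegrableOn (fun _ : ℝ => (0:ℝ)) (Ioi 0) volume)
    · simpa using (integrableOn_zero :
        IntegrableOn (fun _ : ℝ => (0:ℝ)) (Ioi 0) volume)
    · apply summable_of_ne_finset_zero (s := {a - 1, b - 1})
      intro k hk
      simp only [Finset.mem_insert, Finset.mem_singleton] at hk
      rw [hjump k, if_neg (by omega), if_neg (by omega)]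
      norm_num
  have hval := hC F hmem
  -- compute the integral
  have hIval : ∫ t in Ioi (0:ℝ), F.f t ^ 2 = x b - x a := by
    calc ∫ t in Ioi (0:ℝ), F.f t ^ 2
        = ∫ t in Ioi (0:ℝ), Set.indicator (Ioo (x a) (x b)) (fun _ => (1:ℝ)) t := by
          rw [hfsq]
      _ = ∫ t in Ioi (0:ℝ) ∩ Ioo (x a) (x b), (1:ℝ) := setIntegral_indicator measurableSet_Ioo
      _ = ∫ t in Ioo (x a) (x b), (1:ℝ) := by
          rw [Set.inter_eq_self_of_subset_right hIoo_sub]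
      _ = x b - x a := by
          rw [setIntegral_const, measureReal_def, smul_eq_mul, mul_one, Real.volume_Ioo,
            ENNReal.toReal_ofReal (by linarith [hmono hab])]
  -- compute the form value
  have hfirst : (∫ t in Ioi (0:ℝ), (F.f' t ^ 2 + (fun _ : ℝ => (0:ℝ)) t * F.f t ^ 2)) = 0 := by
    have : (fun t : ℝ => F.f' t ^ 2 + (fun _ : ℝ => (0:ℝ)) t * F.f t ^ 2)
        = fun _ : ℝ => (0:ℝ) := by
      funext t
      show (0:ℝ) ^ 2 + 0 * F.f t ^ 2 = 0
      norm_num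
    rw [this]
    simp
  have htsum : ∑' k, F.jump k ^ 2 / β (k + 1)
      = (if 1 ≤ a then 1 / β a else 0) + 1 / β b := by
    rw [tsum_eq_sum (s := {a - 1, b - 1}) (by
      intro k hk
      simp only [Finset.mem_insert, Finset.mem_singleton] at hk
      rw [hjump k, if_neg (by omega), if_neg (by omega)]
      norm_num)]
    rcases Nat.eq_zero_or_pos a with ha0 | ha1
    · subst ha0
      simp only [Nat.zero_sub, if_neg (by omega : ¬ (1:ℕ) ≤ 0), zero_add]
      rcases Nat.eq_or_lt_of_le (by omega : 1 ≤ b) with hb1 | hb2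
      · -- b = 1 : the set is {0}
        have : ({0 - 1, b - 1} : Finset ℕ) = {0} := by
          rw [← hb1]; rfl
        rw [this, Finset.sum_singleton, hjump 0, if_neg (by omega), if_pos (by omega)]
        norm_num
        rw [← hb1]
      · have hne : (0:ℕ) - 1 ≠ b - 1 := by omega
        rw [Finset.sum_pair hne]
        have hb' : b - 1 + 1 = b := by omega
        rw [hjump (0 - 1), hjump (b - 1), hb', if_neg (by omega), if_neg (by omega),
          if_neg (by omega), if_pos rfl]
        norm_num
    · have hne : a - 1 ≠ b - 1 := by omega
      have ha' : a - 1 + 1 = a := by omega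
      have hb' : b - 1 + 1 = b := by omega
      rw [Finset.sum_pair hne, hjump (a - 1), hjump (b - 1), ha', hb',
        if_pos rfl, if_neg (by omega), if_pos rfl, if_pos (show (1:ℕ) ≤ a from ha1)]
      norm_num
  rw [formVal, hfirst, zero_add, htsum, hIval] at hval
  exact hval


set_option maxHeartbeats 2000000 in
/-- **Corollary 2.12**: if `d^* < ∞` and
`d_j^- = d_{k_{j-1}+1} + ⋯ + d_{k_j} ≤ C₂ min(d_{k_{j-1}+1}, d_{k_j})` for all `j`,
then `t_{X,β}` is lower semibounded iff `1/|β_{k_j}| ≤ C' min(d_j^-, d_{j+1}^-)`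
for all `j` and some `C' ≥ 0`. -/
theorem stmt_7 (x : ℕ → ℝ) (hx0 : x 0 = 0) (hmono : StrictMono x)
    (hxtop : Tendsto x atTop atTop)
    (β : ℕ → ℝ) (hβ : ∀ k, β (k + 1) ≠ 0)
    (κ : ℕ → ℕ) (hκmono : StrictMono κ) (hκ1 : ∀ j, 1 ≤ κ j)
    (hκneg : ∀ j, β (κ j) < 0)
    (hκall : ∀ n, 1 ≤ n → β n < 0 → ∃ j, κ j = n)
    (D : ℝ) (hD : ∀ k, x (k + 1) - x k ≤ D)
    (C₂ : ℝ) (hC₂ : 0 < C₂)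
    (hgeom : ∀ j, dminus x κ j ≤
      C₂ * min (x (kprev κ j + 1) - x (kprev κ j)) (x (κ j) - x (κ j - 1))) :
    (∃ C : ℝ, 0 ≤ C ∧ ∀ F : PW1 x, MemDom x (fun _ => 0) β F →
        formVal x (fun _ => 0) β F ≥ -C * ∫ t in Ioi (0 : ℝ), F.f t ^ 2) ↔
      (∃ C' : ℝ, 0 ≤ C' ∧
        ∀ j, 1 / |β (κ j)| ≤ C' * min (dminus x κ j) (dminus x κ (j + 1))) := by
  constructor
  · -- Necessity: test with indicators of the gaps between negative nodes.
    rintro ⟨C, hC0, hC⟩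
    refine ⟨C, hC0, ?_⟩
    intro j
    have hβj : β (κ j) < 0 := hκneg j
    have h1 : 1 / |β (κ j)| ≤ C * dminus x κ j := by
      rw [abs_of_neg hβj, div_neg]
      cases j with
      | zero =>
          have hstep := necessity_step hx0 hmono β hC (a := 0) (b := κ 0) (hκ1 0)
          rw [if_neg (by omega), zero_add] at hstep
          have hd0 : dminus x κ 0 = x (κ 0) - x 0 := rfl
          rw [hd0]
          linarith [hstep]
      | succ j' =>
          have hstep := necessity_step hx0 hmono β hC
            (a := κ j') (b := κ (j' + 1)) (hκmono (Nat.lt_succ_self j'))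
          rw [if_pos (hκ1 j')] at hstep
          have hneg' : 1 / β (κ j') < 0 := div_neg_of_pos_of_neg one_pos (hκneg j')
          have hd0 : dminus x κ (j' + 1) = x (κ (j' + 1)) - x (κ j') := rfl
          rw [hd0]
          linarith [hstep]
    have h2 : 1 / |β (κ j)| ≤ C * dminus x κ (j + 1) := by
      rw [abs_of_neg hβj, div_neg]
      have hstep := necessity_step hx0 hmono β hC
        (a := κ j) (b := κ (j + 1)) (hκmono (Nat.lt_succ_self j))
      rw [if_pos (hκ1 j)] at hstep
      have hneg' : 1 / β (κ (j + 1)) < 0 := div_neg_of_pos_of_neg one_pos (hκneg (j + 1))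
      have hd0 : dminus x κ (j + 1) = x (κ (j + 1)) - x (κ j) := rfl
      rw [hd0]
      linarith [hstep]
    rcases min_cases (dminus x κ j) (dminus x κ (j + 1)) with ⟨hmin, _⟩ | ⟨hmin, _⟩ <;>
      rw [hmin]
    · exact h1
    · exact h2
  · -- Sufficiency: absorb the negative jumps via trace estimates.
    rintro ⟨C', hC'0, hC'⟩
    have hd : ∀ k, 0 < x (k + 1) - x k := fun k => sub_pos.2 (hmono (Nat.lt_succ_self k))
    have hD0 : 0 < D := lt_of_lt_of_le (hd 0) (hD 0)
    set c₁ := C' * C₂ with hc₁def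
    have hc₁0 : 0 ≤ c₁ := mul_nonneg hC'0 hC₂.le
    have hden : 0 < 8 * c₁ * D + 1 := by positivity
    set η := 1 / (8 * c₁ * D + 1) with hηdef
    have hη0 : 0 < η := by positivity
    have hηb : 4 * c₁ * D * η ≤ 1 / 2 := by
      rw [hηdef, mul_one_div, div_le_div_iff₀ hden (by norm_num : (0:ℝ) < 2)]
      nlinarith [hc₁0, hD0]
    refine ⟨2 * (4 * c₁ * (1 + D / η)), by positivity, ?_⟩
    intro F hF
    obtain ⟨hf2, hf'2, _, hsum⟩ := hF
    set P : ℕ → ℝ := fun k => ∫ t in Ioc (x k) (x (k + 1)), F.f t ^ 2 with hPdef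
    set E : ℕ → ℝ := fun k => ∫ t in Ioc (x k) (x (k + 1)), F.f' t ^ 2 with hEdef
    have hP0 : ∀ k, 0 ≤ P k :=
      fun k => setIntegral_nonneg measurableSet_Ioc fun t _ => sq_nonneg _
    have hE0 : ∀ k, 0 ≤ E k :=
      fun k => setIntegral_nonneg measurableSet_Ioc fun t _ => sq_nonneg _
    have hf2k : ∀ k, IntegrableOn (fun t => F.f t ^ 2) (Ioc (x k) (x (k + 1))) volume :=
      fun k => hf2.mono_set (Ioc_sub_Ioi hx0 hmono k)
    set g : ℕ → ℝ := fun k => if β (k + 1) < 0 then F.jump k ^ 2 / |β (k + 1)| else 0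
      with hgdef
    have key : ∀ k, g k ≤ (4 * c₁ * (1 + D / η)) * (P k + P (k + 1))
        + (1 / 2) * (E k + E (k + 1)) := by
      intro k
      rw [hgdef]
      simp only []
      split_ifs with hneg
      · obtain ⟨j, hj⟩ := hκall (k + 1) (by omega) hneg
        -- the weight bounds
        have e0 : 1 / |β (κ j)| ≤ C' * dminus x κ j :=
          le_trans (hC' j) (mul_le_mul_of_nonneg_left (min_le_left _ _) hC'0)
        have e1 : dminus x κ j ≤ C₂ * (x (κ j) - x (κ j - 1)) :=
          le_trans (hgeom j) (mul_le_mul_of_nonneg_left (min_le_right _ _) hC₂.le)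
        have e2 : 1 / |β (κ j)| ≤ C' * (C₂ * (x (κ j) - x (κ j - 1))) :=
          le_trans e0 (mul_le_mul_of_nonneg_left e1 hC'0)
        rw [hj] at e2
        simp only [Nat.add_sub_cancel] at e2
        have hw1 : 1 / |β (k + 1)| ≤ c₁ * (x (k + 1) - x k) := by
          have : C' * (C₂ * (x (k + 1) - x k)) = c₁ * (x (k + 1) - x k) := by
            rw [hc₁def]; ring
          linarith [e2, this.le, this.ge]
        have f0 : 1 / |β (κ j)| ≤ C' * dminus x κ (j + 1) :=
          le_trans (hC' j) (mul_le_mul_of_nonneg_left (min_le_right _ _) hC'0)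
        have f1 : dminus x κ (j + 1)
            ≤ C₂ * (x (kprev κ (j + 1) + 1) - x (kprev κ (j + 1))) :=
          le_trans (hgeom (j + 1)) (mul_le_mul_of_nonneg_left (min_le_left _ _) hC₂.le)
        have f2 : kprev κ (j + 1) = κ j := rfl
        rw [f2, hj] at f1
        have f3 : 1 / |β (κ j)| ≤ C' * (C₂ * (x (k + 1 + 1) - x (k + 1))) :=
          le_trans f0 (mul_le_mul_of_nonneg_left f1 hC'0)
        rw [hj] at f3
        have hw2 : 1 / |β (k + 1)| ≤ c₁ * (x (k + 1 + 1) - x (k + 1)) := by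
          have : C' * (C₂ * (x (k + 1 + 1) - x (k + 1)))
              = c₁ * (x (k + 1 + 1) - x (k + 1)) := by rw [hc₁def]; ring
          linarith [f3, this.le, this.ge]
        -- trace bounds
        have hδ0 : 0 < min (x (k + 1) - x k) η := lt_min (hd k) hη0
        have hδ'0 : 0 < min (x (k + 1 + 1) - x (k + 1)) η := lt_min (hd (k + 1)) hη0
        have hTL := trace_left hmono F k (hf2k k) hδ0 (min_le_left _ _)
        have hTR := trace_right hmono F (k + 1) (hf2k (k + 1)) hδ'0 (min_le_left _ _)
        have hw0 : 0 ≤ 1 / |β (k + 1)| := by positivity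
        have hL := weighted_bound (hP0 k) (hE0 k) hw0 hw1 hc₁0 (hd k) (hD k) hη0 hTL
        have hR := weighted_bound (hP0 (k + 1)) (hE0 (k + 1)) hw0 hw2 hc₁0
          (hd (k + 1)) (hD (k + 1)) hη0 hTR
        -- combine
        have hjumpsq : F.jump k ^ 2 ≤ 2 * F.fl (k + 1) ^ 2 + 2 * F.fr (k + 1) ^ 2 := by
          have hje : F.jump k = F.fr (k + 1) - F.fl (k + 1) := rfl
          rw [hje]
          nlinarith [sq_nonneg (F.fr (k + 1) + F.fl (k + 1))]
        have hdiv : F.jump k ^ 2 / |β (k + 1)| = F.jump k ^ 2 * (1 / |β (k + 1)|) := by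
          rw [div_eq_mul_one_div]
        rw [hdiv]
        have hstep : F.jump k ^ 2 * (1 / |β (k + 1)|)
            ≤ (2 * F.fl (k + 1) ^ 2 + 2 * F.fr (k + 1) ^ 2) * (1 / |β (k + 1)|) :=
          mul_le_mul_of_nonneg_right hjumpsq hw0
        have m1 : (4 * c₁ * D * η) * E k ≤ (1 / 2) * E k :=
          mul_le_mul_of_nonneg_right hηb (hE0 k)
        have m2 : (4 * c₁ * D * η) * E (k + 1) ≤ (1 / 2) * E (k + 1) :=
          mul_le_mul_of_nonneg_right hηb (hE0 (k + 1))
        linarith [hstep, hL, hR, m1, m2]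
      · have hcoef : (0:ℝ) ≤ 4 * c₁ * (1 + D / η) := by positivity
        exact add_nonneg (mul_nonneg hcoef (add_nonneg (hP0 k) (hP0 (k + 1))))
          (mul_nonneg (by norm_num) (add_nonneg (hE0 k) (hE0 (k + 1))))
    have hg0 : ∀ k, 0 ≤ g k := by
      intro k
      rw [hgdef]
      simp only []
      split_ifs
      · positivity
      · exact le_rfl
    have hgle : ∀ k, g k ≤ F.jump k ^ 2 / |β (k + 1)| := by
      intro k
      rw [hgdef]
      simp only []
      split_ifs
      · exact le_rfl
      · positivity
    have hgsum : Summable g := Summable.of_nonneg_of_le hg0 hgle hsum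
    have hIf2 : (0:ℝ) ≤ ∫ t in Ioi (0:ℝ), F.f t ^ 2 :=
      setIntegral_nonneg measurableSet_Ioi fun t _ => sq_nonneg _
    have hIf'2 : (0:ℝ) ≤ ∫ t in Ioi (0:ℝ), F.f' t ^ 2 :=
      setIntegral_nonneg measurableSet_Ioi fun t _ => sq_nonneg _
    have hgtsum : ∑' k, g k ≤ (2 * (4 * c₁ * (1 + D / η))) * (∫ t in Ioi (0:ℝ), F.f t ^ 2)
        + ∫ t in Ioi (0:ℝ), F.f' t ^ 2 := by
      apply Summable.tsum_le_of_sum_le hgsum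
      intro S
      have step1 : ∑ k ∈ S, g k ≤ ∑ k ∈ S, ((4 * c₁ * (1 + D / η)) * (P k + P (k + 1))
          + (1 / 2) * (E k + E (k + 1))) := Finset.sum_le_sum fun k _ => key k
      have s1 : ∑ k ∈ S, P k ≤ ∫ t in Ioi (0:ℝ), F.f t ^ 2 :=
        sum_intervals_le hx0 hmono (fun t => sq_nonneg _) hf2 S
      have s2 : ∑ k ∈ S, P (k + 1) ≤ ∫ t in Ioi (0:ℝ), F.f t ^ 2 := by
        have himg : ∑ k ∈ S, P (k + 1) = ∑ m ∈ S.image (· + 1), P m :=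
          (Finset.sum_image (fun a _ b _ h => by omega)).symm
        rw [himg]
        exact sum_intervals_le hx0 hmono (fun t => sq_nonneg _) hf2 _
      have s3 : ∑ k ∈ S, E k ≤ ∫ t in Ioi (0:ℝ), F.f' t ^ 2 :=
        sum_intervals_le hx0 hmono (fun t => sq_nonneg _) hf'2 S
      have s4 : ∑ k ∈ S, E (k + 1) ≤ ∫ t in Ioi (0:ℝ), F.f' t ^ 2 := by
        have himg : ∑ k ∈ S, E (k + 1) = ∑ m ∈ S.image (· + 1), E m :=
          (Finset.sum_image (fun a _ b _ h => by omega)).symm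
        rw [himg]
        exact sum_intervals_le hx0 hmono (fun t => sq_nonneg _) hf'2 _
      have expand : ∑ k ∈ S, ((4 * c₁ * (1 + D / η)) * (P k + P (k + 1))
          + (1 / 2) * (E k + E (k + 1)))
          = (4 * c₁ * (1 + D / η)) * ((∑ k ∈ S, P k) + ∑ k ∈ S, P (k + 1))
            + (1 / 2) * ((∑ k ∈ S, E k) + ∑ k ∈ S, E (k + 1)) := by
        rw [Finset.sum_add_distrib, ← Finset.mul_sum, ← Finset.mul_sum,
          Finset.sum_add_distrib, Finset.sum_add_distrib]
      have hcoef : (0:ℝ) ≤ 4 * c₁ * (1 + D / η) := by positivity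
      rw [expand] at step1
      have t1 : (4 * c₁ * (1 + D / η)) * ((∑ k ∈ S, P k) + ∑ k ∈ S, P (k + 1))
          ≤ (4 * c₁ * (1 + D / η)) * ((∫ t in Ioi (0:ℝ), F.f t ^ 2)
            + ∫ t in Ioi (0:ℝ), F.f t ^ 2) :=
        mul_le_mul_of_nonneg_left (add_le_add s1 s2) hcoef
      have t2 : (1 / 2 : ℝ) * ((∑ k ∈ S, E k) + ∑ k ∈ S, E (k + 1))
          ≤ (1 / 2 : ℝ) * ((∫ t in Ioi (0:ℝ), F.f' t ^ 2)
            + ∫ t in Ioi (0:ℝ), F.f' t ^ 2) :=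
        mul_le_mul_of_nonneg_left (add_le_add s3 s4) (by norm_num)
      linarith [step1, t1, t2]
    -- lower bound for the signed tsum
    have hsum' : Summable (fun k => F.jump k ^ 2 / β (k + 1)) := by
      apply Summable.of_abs
      have : (fun k => |F.jump k ^ 2 / β (k + 1)|)
          = fun k => F.jump k ^ 2 / |β (k + 1)| := by
        funext k
        rw [abs_div, abs_of_nonneg (sq_nonneg _)]
      rw [this]
      exact hsum
    have hT : -∑' k, g k ≤ ∑' k, F.jump k ^ 2 / β (k + 1) := by
      rw [← tsum_neg]
      apply Summable.tsum_le_tsum _ hgsum.neg hsum'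
      intro k
      rw [hgdef]
      simp only []
      split_ifs with hneg
      · rw [abs_of_neg hneg, div_neg, neg_neg]
      · rw [neg_zero]
        have hpos : 0 < β (k + 1) := lt_of_le_of_ne (not_lt.1 hneg) (Ne.symm (hβ k))
        positivity
    have hfirst : (∫ t in Ioi (0:ℝ), (F.f' t ^ 2 + (fun _ : ℝ => (0:ℝ)) t * F.f t ^ 2))
        = ∫ t in Ioi (0:ℝ), F.f' t ^ 2 := by
      apply integral_congr_ae
      exact Filter.Eventually.of_forall fun t => by simp
    show formVal x (fun _ => 0) β F ≥ _
    rw [formVal, hfirst]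
    have := hgtsum
    linarith [hT, hgtsum, hIf'2]


end
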